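/- Let u₀(x) = (1/2)·χ_{[-1,1]}(x) be the uniform density on [-1,1]. Then for 0 ≤ t < 1, the function u(x,t) = (2-2t)^{-1}·χ_{[t-1,1-t]}(x) is a weak solution of ∂_t u = ∂_x[u·(2F-1)] with F(x,t) = ∫_{-∞}^x u(y,t) dy, and u(·,0) = u₀. -/

import Mathlib

open MeasureTheory Set

/-- Explicit solution with uniform initial datum. -/
noncomputable def uSol (x t : ℝ) : ℝ :=
  Set.indicator (Set.Icc (t - 1) (1 - t)) (fun _ => (2 - 2 * t)⁻¹) x

/-- Its cumulative distribution function. -/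
noncomputable def Fcdf (x t : ℝ) : ℝ := ∫ y in Set.Iic x, uSol y t

lemma integral_mul_uSol (f : ℝ → ℝ) (s : ℝ) (hs : s ≤ 1) :
    ∫ x, f x * uSol x s = (2 - 2*s)⁻¹ * ∫ x in (s-1)..(1-s), f x := by
  have hab : s - 1 ≤ 1 - s := by linarith
  have h1 : ∀ x, f x * uSol x s
      = Set.indicator (Set.Icc (s-1) (1-s)) (fun x => (2-2*s)⁻¹ * f x) x := by
    intro x
    unfold uSol
    by_cases hx : x ∈ Set.Icc (s-1) (1-s) <;>
      simp [Set.indicator_of_mem, Set.indicator_of_notMem, hx, mul_comm]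
  simp_rw [h1]
  rw [MeasureTheory.integral_indicator measurableSet_Icc,
    MeasureTheory.integral_Icc_eq_integral_Ioc,
    ← intervalIntegral.integral_of_le hab, intervalIntegral.integral_const_mul]

lemma Fcdf_eq (t : ℝ) {x : ℝ} (hx : x ∈ Set.Icc (t-1) (1-t)) :
    Fcdf x t = (2-2*t)⁻¹ * (x - (t-1)) := by
  obtain ⟨hx1, hx2⟩ := hx
  unfold Fcdf uSol
  rw [MeasureTheory.setIntegral_indicator measurableSet_Icc]
  have : Set.Iic x ∩ Set.Icc (t-1) (1-t) = Set.Icc (t-1) x := by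
    ext y
    simp only [Set.mem_inter_iff, Set.mem_Iic, Set.mem_Icc]
    constructor
    · rintro ⟨h1, h2, h3⟩; exact ⟨h2, h1⟩
    · rintro ⟨h1, h2⟩; exact ⟨h2, h1, by linarith⟩
  rw [this, MeasureTheory.setIntegral_const, Real.volume_real_Icc_of_le (by linarith), smul_eq_mul,
    mul_comm]

lemma rhs_eq (f : ℝ → ℝ) (t : ℝ) (ht1 : t < 1) :
    ∫ x, f x * uSol x t * (2 * Fcdf x t - 1)
      = (2-2*t)⁻¹ * ∫ x in (t-1)..(1-t), f x * (x / (1-t)) := by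
  have hne : (1:ℝ) - t ≠ 0 := by intro hc; linarith [hc]
  have key : ∀ x, f x * uSol x t * (2 * Fcdf x t - 1)
      = (fun x => f x * (x / (1-t)) * uSol x t) x := by
    intro x
    by_cases hx : x ∈ Set.Icc (t-1) (1-t)
    · have hu : uSol x t = (2-2*t)⁻¹ := Set.indicator_of_mem hx _
      have hne2 : (2:ℝ) - 2*t ≠ 0 := by intro hc; linarith [hc]
      have hF : 2 * Fcdf x t - 1 = x / (1-t) := by
        rw [Fcdf_eq t hx]
        field_simp
        ring
      simp only [hu, hF]
      ring
    · have hu : uSol x t = 0 := Set.indicator_of_notMem hx _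
      simp [hu]
  simp_rw [key]
  exact integral_mul_uSol _ t ht1.le

theorem uniform_explicit_is_weak_solution :
    (∀ x : ℝ, uSol x 0 = Set.indicator (Set.Icc (-1 : ℝ) 1) (fun _ => (1 : ℝ) / 2) x) ∧
    (∀ h : ℝ → ℝ, ContDiff ℝ 1 h → HasCompactSupport h →
      ∀ t ∈ Set.Ioo (0 : ℝ) 1,
        HasDerivAt (fun s => ∫ x, h x * uSol x s)
          (-∫ x, deriv h x * uSol x t * (2 * Fcdf x t - 1)) t) := by
  constructor
  · intro x
    unfold uSol
    norm_num
  · intro h hC1 _hcs t ht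
    obtain ⟨ht0, ht1⟩ := ht
    have hcont : Continuous h := hC1.continuous
    have hderiv : Continuous (deriv h) := hC1.continuous_deriv le_rfl
    have hne : (1:ℝ) - t ≠ 0 := by intro hc; linarith [hc]
    have hne2 : (2:ℝ) - 2*t ≠ 0 := by intro hc; linarith [hc]
    set H : ℝ → ℝ := fun x => ∫ y in (0:ℝ)..x, h y with hH
    have hHderiv : ∀ x : ℝ, HasDerivAt H (h x) x := fun x =>
      (hcont.integral_hasStrictDerivAt 0 x).hasDerivAt
    -- derivative of g(s) = (2-2s)⁻¹ * (H(1-s) - H(s-1))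
    have hinner1 : HasDerivAt (fun s : ℝ => H (1 - s)) (h (1-t) * (-1)) t :=
      (hHderiv (1-t)).comp t ((hasDerivAt_id t).const_sub 1)
    have hinner2 : HasDerivAt (fun s : ℝ => H (s - 1)) (h (t-1) * 1) t :=
      by
        have h2 : HasDerivAt (fun s : ℝ => s - 1) 1 t := (hasDerivAt_id' t).sub_const 1
        have h1 : HasDerivAt H (h (t-1)) ((fun s : ℝ => s - 1) t) := hHderiv (t-1)
        exact h1.comp t h2
    have hcoef : HasDerivAt (fun s : ℝ => (2 - 2*s)⁻¹)
        (-(-2) / (2 - 2*t)^2) t := by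
      have : HasDerivAt (fun s : ℝ => 2 - 2*s) (-2) t := by
        simpa using ((hasDerivAt_id t).const_mul 2).const_sub 2
      exact this.inv hne2
    have hg : HasDerivAt (fun s => (2 - 2*s)⁻¹ * (H (1-s) - H (s-1)))
        ((-(-2) / (2 - 2*t)^2) * (H (1-t) - H (t-1))
          + (2 - 2*t)⁻¹ * (h (1-t) * (-1) - h (t-1) * 1)) t :=
      hcoef.mul (hinner1.sub hinner2)
    have heq : (fun s => ∫ x, h x * uSol x s)
        =ᶠ[nhds t] (fun s => (2 - 2*s)⁻¹ * (H (1-s) - H (s-1))) := by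
      filter_upwards [Ioo_mem_nhds ht0 ht1] with s hs
      rw [integral_mul_uSol h s hs.2.le]
      congr 1
      rw [hH]
      rw [intervalIntegral.integral_interval_sub_left
        (hcont.intervalIntegrable 0 (1-s)) (hcont.intervalIntegrable 0 (s-1))]
    have hmain := hg.congr_of_eventuallyEq heq
    refine hmain.congr_deriv (Eq.symm ?_)
    -- value equality
    rw [rhs_eq (deriv h) t ht1]
    -- integration by parts
    have hparts : ∫ x in (t-1)..(1-t), id x * deriv h x
        = id (1-t) * h (1-t) - id (t-1) * h (t-1)
          - ∫ x in (t-1)..(1-t), 1 * h x := by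
      apply intervalIntegral.integral_mul_deriv_eq_deriv_mul
        (u := id) (u' := fun _ => (1:ℝ)) (v := h) (v' := deriv h)
      · intro x _; exact hasDerivAt_id x
      · intro x _; exact (hC1.differentiable one_ne_zero x).hasDerivAt
      · exact (continuous_const).intervalIntegrable _ _
      · exact hderiv.intervalIntegrable _ _
    simp only [id] at hparts
    have hIeq : ∫ x in (t-1)..(1-t), deriv h x * (x / (1-t))
        = (1/(1-t)) * ∫ x in (t-1)..(1-t), x * deriv h x := by
      rw [← intervalIntegral.integral_const_mul]
      congr 1; ext x; field_simp
    have hHint : H (1-t) - H (t-1) = ∫ x in (t-1)..(1-t), h x := by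
      rw [hH]
      rw [intervalIntegral.integral_interval_sub_left
        (hcont.intervalIntegrable 0 (1-t)) (hcont.intervalIntegrable 0 (t-1))]
    have hone : ∫ x in (t-1)..(1-t), 1 * h x = ∫ x in (t-1)..(1-t), h x := by
      simp
    rw [hIeq, hparts, hone, ← hHint]
    field_simp
    ring
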